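/- Let M be a finitely generated meet irreducible μ-module satisfying the finite coprime condition, equipped with the topology G̃(M) generated by B_M. Then for every submodule N of M and every m ∈ M, J(N) ⊆ closure(m + N) in G̃(M), where J(N) is the intersection of all maximal submodules of M containing N. -/
import Mathlib


open Pointwise

/-- In the Golomb topology of a finitely generated meet irreducible μ-module
satisfying the finite coprime condition, `J(N) ⊆ closure (m + N)` for every
submodule `N` and every `m ∈ M`. -/
theorem jacobson_subset_closure_coset
    {R M : Type*} [CommRing R] [AddCommGroup M] [Module R M] [Nontrivial M]
    [Module.Finite R M]
    (hmi : ∀ K L : Submodule R M, K ≠ ⊥ → L ≠ ⊥ → K ⊓ L ≠ ⊥)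
    (hfcc : ∀ N K₁ K₂ : Submodule R M, N ⊔ K₁ = ⊤ → N ⊔ K₂ = ⊤ → N ⊔ (K₁ ⊓ K₂) = ⊤)
    (hmu : ∀ N K : Submodule R M, (N ⊔ K).colon ⊤ = N.colon ⊤ ⊔ K.colon ⊤)
    (N : Submodule R M) (m : M) :
    letI B : Set (Set M) := {S | ∃ (x : M) (P : Submodule R M),
      P ≠ ⊥ ∧ P ⊔ Submodule.span R {x} = ⊤ ∧ S = x +ᵥ (P : Set M)}
    letI t : TopologicalSpace M := TopologicalSpace.generateFrom B
    ((sInf {P : Submodule R M | IsCoatom P ∧ N ≤ P} : Submodule R M) : Set M) ⊆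
      @closure M t (m +ᵥ (N : Set M)) := by
  intro x hx
  have hcoatomic : IsCoatomic (Submodule R M) :=
    CompleteLattice.coatomic_of_top_compact
      ((Submodule.fg_iff_compact _).mp Module.Finite.fg_top)
  -- key algebraic fact: if span x ⊔ P = ⊤ then N ⊔ P = ⊤
  have key : ∀ P : Submodule R M, Submodule.span R {x} ⊔ P = ⊤ → N ⊔ P = ⊤ := by
    intro P hP
    by_contra h
    obtain ⟨Q, hQ, hle⟩ := (eq_top_or_exists_le_coatom (N ⊔ P)).resolve_left h
    have hxQ : x ∈ Q := by
      have := Submodule.mem_sInf.mp hx Q ⟨hQ, le_sup_left.trans hle⟩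
      exact this
    have : (⊤ : Submodule R M) ≤ Q := by
      rw [← hP]
      exact sup_le ((Submodule.span_singleton_le_iff_mem _ _).mpr hxQ)
        (le_sup_right.trans hle)
    exact hQ.1 (top_le_iff.mp this)
  -- every open set containing x contains a coset x + P with span x ⊔ P = ⊤
  have main : ∀ o : Set M,
      TopologicalSpace.GenerateOpen {S | ∃ (y : M) (P : Submodule R M),
        P ≠ ⊥ ∧ P ⊔ Submodule.span R {y} = ⊤ ∧ S = y +ᵥ (P : Set M)} o → x ∈ o →
      ∃ P : Submodule R M, Submodule.span R {x} ⊔ P = ⊤ ∧ x +ᵥ (P : Set M) ⊆ o := by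
    intro o ho
    induction ho with
    | basic s hs =>
      intro hxs
      obtain ⟨y, P, _, hPy, rfl⟩ := hs
      have hp : -y + x ∈ P := by
        rwa [Set.mem_vadd_set_iff_neg_vadd_mem] at hxs
      refine ⟨P, ?_, ?_⟩
      · have hy : y ∈ Submodule.span R {x} ⊔ P := by
          have : y = x + -(-y + x) := by abel
          rw [this]
          exact Submodule.add_mem _
            (Submodule.mem_sup_left (Submodule.mem_span_singleton_self x))
            (Submodule.mem_sup_right (neg_mem hp))
        have : P ⊔ Submodule.span R {y} ≤ Submodule.span R {x} ⊔ P :=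
          sup_le le_sup_right
            ((Submodule.span_singleton_le_iff_mem _ _).mpr hy)
        exact top_le_iff.mp (hPy ▸ this)
      · intro z hz
        rw [Set.mem_vadd_set_iff_neg_vadd_mem] at hz ⊢
        simp only [vadd_eq_add] at hz ⊢
        have : -y + z = (-y + x) + (-x + z) := by abel
        rw [this]
        exact Submodule.add_mem _ hp hz
    | univ =>
      intro _
      exact ⟨⊤, by simp, by simp⟩
    | inter s₁ s₂ _ _ ih₁ ih₂ =>
      intro hxs
      obtain ⟨P₁, hP₁, hs₁⟩ := ih₁ hxs.1
      obtain ⟨P₂, hP₂, hs₂⟩ := ih₂ hxs.2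
      refine ⟨P₁ ⊓ P₂, hfcc _ _ _ hP₁ hP₂, ?_⟩
      intro z hz
      rw [Set.mem_vadd_set_iff_neg_vadd_mem] at hz
      constructor
      · exact hs₁ (Set.mem_vadd_set_iff_neg_vadd_mem.mpr hz.1)
      · exact hs₂ (Set.mem_vadd_set_iff_neg_vadd_mem.mpr hz.2)
    | sUnion S _ ih =>
      intro hxs
      obtain ⟨s, hsS, hxs⟩ := hxs
      obtain ⟨P, hP, hsub⟩ := ih s hsS hxs
      exact ⟨P, hP, hsub.trans (Set.subset_sUnion_of_mem hsS)⟩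
  -- conclude
  letI t : TopologicalSpace M := TopologicalSpace.generateFrom {S | ∃ (y : M) (P : Submodule R M),
      P ≠ ⊥ ∧ P ⊔ Submodule.span R {y} = ⊤ ∧ S = y +ᵥ (P : Set M)}
  rw [mem_closure_iff]
  intro o ho hxo
  obtain ⟨P, hP, hsub⟩ := main o ho hxo
  have htop : N ⊔ P = ⊤ := key P hP
  have hxm : x - m ∈ N ⊔ P := htop ▸ Submodule.mem_top
  obtain ⟨n, hn, p, hp, hnp⟩ := Submodule.mem_sup.mp hxm
  refine ⟨x - p, hsub ?_, ?_⟩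
  · rw [Set.mem_vadd_set_iff_neg_vadd_mem]
    show -x + (x - p) ∈ P
    have : -x + (x - p) = -p := by abel
    rw [this]
    exact neg_mem hp
  · rw [Set.mem_vadd_set_iff_neg_vadd_mem]
    show -m + (x - p) ∈ N
    have : -m + (x - p) = (x - m) - p := by abel
    rw [this, ← hnp]
    simpa using hn
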